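/- Let A be a weighted automaton over ℚ with m states. Then there exists an equivalent weighted automaton A' with 2m states such that all transition matrix entries of A' are nonnegative and all entries of the initial vector of A' are nonnegative (while the final vector may have negative entries). -/

import Mathlib

open Matrix

/-- A weighted automaton over alphabet `α` with `m` states and rational weights. -/
structure WA (α : Type) (m : ℕ) where
  M : α → Matrix (Fin m) (Fin m) ℚ
  I : Fin m → ℚ
  F : Fin m → ℚ

/-- The function recognized by a weighted automaton. -/
def WA.eval {α : Type} {m : ℕ} (A : WA α m) (w : List α) : ℚ :=
  A.I ⬝ᵥ (((w.map A.M).prod) *ᵥ A.F)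

theorem stmt_12 (α : Type) (m : ℕ) (A : WA α m) :
    ∃ B : WA α (2 * m),
      (∀ a : α, ∀ i j, 0 ≤ B.M a i j) ∧
      (∀ i, 0 ≤ B.I i) ∧
      (∀ w : List α, B.eval w = A.eval w) := by
  let e : (Fin m ⊕ Fin m) ≃ Fin (2 * m) := finSumFinEquiv.trans (finCongr (two_mul m).symm)
  let pos : Matrix (Fin m) (Fin m) ℚ → Matrix (Fin m) (Fin m) ℚ := fun M i j => max (M i j) 0
  let neg : Matrix (Fin m) (Fin m) ℚ → Matrix (Fin m) (Fin m) ℚ := fun M i j => max (-(M i j)) 0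
  have hpn : ∀ M : Matrix (Fin m) (Fin m) ℚ, pos M - neg M = M := by
    intro M; funext i j
    show max (M i j) 0 - max (-(M i j)) 0 = M i j
    simp [pos, neg, Matrix.sub_apply, max_zero_sub_max_neg_zero_eq_self]
  let B : WA α (2 * m) :=
    ⟨fun a => (fromBlocks (pos (A.M a)) (neg (A.M a)) (neg (A.M a)) (pos (A.M a))).submatrix
        e.symm e.symm,
      (Sum.elim (fun q => max (A.I q) 0) (fun q => max (-(A.I q)) 0)) ∘ e.symm,
      (Sum.elim A.F (-A.F)) ∘ e.symm⟩
  have key : ∀ w : List α, ∃ P N : Matrix (Fin m) (Fin m) ℚ,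
      (w.map B.M).prod = (fromBlocks P N N P).submatrix e.symm e.symm ∧
        P - N = (w.map A.M).prod := by
    intro w
    induction w with
    | nil =>
      refine ⟨1, 0, ?_, by simp⟩
      simp [fromBlocks_one, submatrix_one_equiv]
    | cons a w ih =>
      obtain ⟨P, N, hP, hPN⟩ := ih
      refine ⟨pos (A.M a) * P + neg (A.M a) * N, pos (A.M a) * N + neg (A.M a) * P, ?_, ?_⟩
      · simp only [List.map_cons, List.prod_cons, hP]
        show (fromBlocks _ _ _ _).submatrix e.symm e.symm * _ = _
        rw [submatrix_mul_equiv, fromBlocks_multiply]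
        rw [add_comm (neg (A.M a) * P), add_comm (neg (A.M a) * N)]
      · calc pos (A.M a) * P + neg (A.M a) * N - (pos (A.M a) * N + neg (A.M a) * P)
            = (pos (A.M a) - neg (A.M a)) * (P - N) := by noncomm_ring
        _ = ((a :: w).map A.M).prod := by
            rw [hpn, hPN]; simp
  refine ⟨B, ?_, ?_, ?_⟩
  · intro a i j
    show 0 ≤ (fromBlocks _ _ _ _) (e.symm i) (e.symm j)
    rcases e.symm i with p | p <;> rcases e.symm j with q | q <;>
      simp [pos, neg, le_max_iff, fromBlocks]
  · intro i
    show 0 ≤ Sum.elim _ _ (e.symm i)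
    rcases e.symm i with p | p <;> simp [le_max_iff]
  · intro w
    obtain ⟨P, N, hP, hPN⟩ := key w
    show B.I ⬝ᵥ ((w.map B.M).prod *ᵥ B.F) = _
    rw [hP]
    have hF : B.F ∘ (e.symm).symm = Sum.elim A.F (-A.F) := by
      funext x; simp [B, Function.comp]
    rw [submatrix_mulVec_equiv, hF]
    show (Sum.elim _ _) ∘ e.symm ⬝ᵥ (_ *ᵥ _) ∘ e.symm = _
    rw [comp_equiv_dotProduct_comp_equiv, fromBlocks_mulVec, sumElim_dotProduct_sumElim]
    simp only [Sum.elim_comp_inl, Sum.elim_comp_inr, Matrix.mulVec_neg]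
    have hI : A.I = (fun q => max (A.I q) 0) - (fun q => max (-(A.I q)) 0) := by
      funext q; simp [max_zero_sub_max_neg_zero_eq_self]
    show _ = A.I ⬝ᵥ ((w.map A.M).prod *ᵥ A.F)
    conv_rhs => rw [← hPN, Matrix.sub_mulVec, hI]
    simp only [dotProduct_add, dotProduct_neg, sub_dotProduct,
      dotProduct_sub]
    ring
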